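/- No sound, effectively axiomatized theory can prove all true non-halting statements: if P is a predicate on codes that is computably enumerable (i.e., there is a partial computable function whose domain is exactly {c | P c}) and sound for non-halting (P c implies that c does not halt on input 0), then P is incomplete: there exists a code c that does not halt on input 0 but for which P c fails. -/

import Mathlib

theorem no_complete_sound_nonhalting_theory
    (P : Nat.Partrec.Code → Prop)
    (hce : ∃ g : Nat.Partrec.Code →. Unit, Partrec g ∧ ∀ c, P c ↔ (g c).Dom)
    (hsound : ∀ c, P c → ¬ (c.eval 0).Dom) :
    ∃ c : Nat.Partrec.Code, ¬ (c.eval 0).Dom ∧ ¬ P c := by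
  by_contra h
  push_neg at h
  obtain ⟨g, hg, hdom⟩ := hce
  have hiff : ∀ c, P c ↔ ¬ (c.eval 0).Dom := fun c =>
    ⟨hsound c, fun hn => h c hn⟩
  have : REPred fun c => ¬ (Nat.Partrec.Code.eval c 0).Dom := by
    have : REPred fun c => (g c).Dom := REPred.of_eq hg.dom_re fun a => Iff.rfl
    exact this.of_eq fun c => by rw [← hdom c, hiff c]
  exact ComputablePred.halting_problem_not_re 0 this
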